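/- Let ħ ≠ 0 be real, V: ℝ² → ℝ smooth, and f_{0,0}, f_{1,0}, f_{2,0}, f_{0,2}: ℝ² → ℝ smooth. Define the second-order operator X on smooth ψ: ℝ² → ℂ by Xψ = (1/2) Σ_{j=0}^{2} [ f_{j,0}·(p̂₁^j p̂₂^{2−j} ψ) + p̂₁^j p̂₂^{2−j}(f_{j,0}·ψ) ] + f_{0,2}·ψ. Then X commutes with Ĥ (i.e., X(Ĥψ) = Ĥ(Xψ) for all smooth ψ) if and only if the following equations hold identically on ℝ²: ∂_y f_{0,0} = 0; ∂_x f_{0,0} + ∂_y f_{1,0} = 0; ∂_x f_{1,0} + ∂_y f_{2,0} = 0; ∂_x f_{2,0} = 0; 2 ∂_y f_{0,2} = f_{1,0} ∂_x V + 2 f_{0,0} ∂_y V; and 2 ∂_x f_{0,2} = 2 f_{2,0} ∂_x V + f_{1,0} ∂_y V. In particular, for N = 2 the quantum determining equations contain no ħ-dependent correction terms and are identical to the classical determining equations. -/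

import Mathlib

set_option maxHeartbeats 4000000


noncomputable section

/-- Partial derivative with respect to `x` of a function on `ℝ²`. -/
def pdx (f : ℝ × ℝ → ℝ) : ℝ × ℝ → ℝ := fun q => fderiv ℝ f q (1, 0)

/-- Partial derivative with respect to `y` of a function on `ℝ²`. -/
def pdy (f : ℝ × ℝ → ℝ) : ℝ × ℝ → ℝ := fun q => fderiv ℝ f q (0, 1)

/-- Partial derivative with respect to `x` of a complex-valued function on `ℝ²`. -/
def pdxC (f : ℝ × ℝ → ℂ) : ℝ × ℝ → ℂ := fun q => fderiv ℝ f q (1, 0)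

/-- Partial derivative with respect to `y` of a complex-valued function on `ℝ²`. -/
def pdyC (f : ℝ × ℝ → ℂ) : ℝ × ℝ → ℂ := fun q => fderiv ℝ f q (0, 1)

/-- The momentum operator `p̂₁ψ = −iħ ∂ψ/∂x`. -/
def P1 (hbar : ℝ) (ψ : ℝ × ℝ → ℂ) : ℝ × ℝ → ℂ := fun q =>
  -Complex.I * (hbar : ℂ) * pdxC ψ q

/-- The momentum operator `p̂₂ψ = −iħ ∂ψ/∂y`. -/
def P2 (hbar : ℝ) (ψ : ℝ × ℝ → ℂ) : ℝ × ℝ → ℂ := fun q =>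
  -Complex.I * (hbar : ℂ) * pdyC ψ q

/-- The quantum Hamiltonian `Ĥψ = −ħ²(ψ_xx + ψ_yy) + V ψ`. -/
def Hop (hbar : ℝ) (V : ℝ × ℝ → ℝ) (ψ : ℝ × ℝ → ℂ) : ℝ × ℝ → ℂ := fun q =>
  -(hbar : ℂ) ^ 2 * (pdxC (pdxC ψ) q + pdyC (pdyC ψ) q) + (V q : ℂ) * ψ q

/-- The second-order symmetrized operator
`Xψ = (1/2) Σ_{j=0}^{2} [f_{j,0}·(p̂₁^j p̂₂^{2−j} ψ) + p̂₁^j p̂₂^{2−j}(f_{j,0}·ψ)] + f_{0,2}·ψ`. -/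
def X2op (hbar : ℝ) (f00 f10 f20 f02 : ℝ × ℝ → ℝ) (ψ : ℝ × ℝ → ℂ) : ℝ × ℝ → ℂ := fun q =>
  (1 / 2) *
      (((f00 q : ℂ) * ((P2 hbar)^[2] ψ) q +
          ((P2 hbar)^[2] (fun p => (f00 p : ℂ) * ψ p)) q) +
        ((f10 q : ℂ) * (P1 hbar (P2 hbar ψ)) q +
          (P1 hbar (P2 hbar (fun p => (f10 p : ℂ) * ψ p))) q) +
        ((f20 q : ℂ) * ((P1 hbar)^[2] ψ) q +
          ((P1 hbar)^[2] (fun p => (f20 p : ℂ) * ψ p)) q)) +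
    (f02 q : ℂ) * ψ q

notation "SM" f => ContDiff ℝ (⊤ : ℕ∞) f

section basiclem
variable {E A : Type*} [NormedAddCommGroup E] [NormedSpace ℝ E]
  [NormedCommRing A] [NormedAlgebra ℝ A]

@[fun_prop] lemma contDiff_ofReal_comp {f : ℝ × ℝ → ℝ} (hf : SM f) :
    ContDiff ℝ (⊤ : ℕ∞) (fun p => (f p : ℂ)) :=
  Complex.ofRealCLM.contDiff.comp hf

lemma contDiff_pd_aux {f : ℝ × ℝ → E} (hf : ContDiff ℝ (⊤:ℕ∞) f) (v : ℝ × ℝ) :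
    ContDiff ℝ (⊤:ℕ∞) (fun q => fderiv ℝ f q v) := by
  have h1 : ContDiff ℝ (⊤:ℕ∞) (fderiv ℝ f) := by
    apply hf.fderiv_right; exact_mod_cast le_refl _
  exact h1.clm_apply contDiff_const

@[fun_prop] lemma contDiff_pdxC {f : ℝ × ℝ → ℂ} (hf : SM f) : ContDiff ℝ (⊤:ℕ∞) (pdxC f) :=
  contDiff_pd_aux hf _
@[fun_prop] lemma contDiff_pdyC {f : ℝ × ℝ → ℂ} (hf : SM f) : ContDiff ℝ (⊤:ℕ∞) (pdyC f) :=
  contDiff_pd_aux hf _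
@[fun_prop] lemma contDiff_pdx {f : ℝ × ℝ → ℝ} (hf : SM f) : ContDiff ℝ (⊤:ℕ∞) (pdx f) :=
  contDiff_pd_aux hf _
@[fun_prop] lemma contDiff_pdy {f : ℝ × ℝ → ℝ} (hf : SM f) : ContDiff ℝ (⊤:ℕ∞) (pdy f) :=
  contDiff_pd_aux hf _

-- generic pointwise rules
lemma pd_mul_aux {f g : ℝ × ℝ → A} (hf : SM f) (hg : SM g) (v : ℝ × ℝ) (q : ℝ × ℝ) :
    fderiv ℝ (fun p => f p * g p) q v = fderiv ℝ f q v * g q + f q * fderiv ℝ g q v := by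
  rw [fderiv_fun_mul (hf.differentiable (by simp) q)
      (hg.differentiable (by simp) q)]
  simp [add_comm, mul_comm]

lemma pd_add_aux {f g : ℝ × ℝ → E} (hf : SM f) (hg : SM g) (v : ℝ × ℝ) (q : ℝ × ℝ) :
    fderiv ℝ (fun p => f p + g p) q v = fderiv ℝ f q v + fderiv ℝ g q v := by
  rw [fderiv_fun_add (hf.differentiable (by simp) q)
      (hg.differentiable (by simp) q)]; rfl

lemma pd_schwarz_aux {f : ℝ × ℝ → E} (hf : SM f) (v w q : ℝ × ℝ) :
    fderiv ℝ (fun p => fderiv ℝ f p w) q v = fderiv ℝ (fun p => fderiv ℝ f p v) q w := by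
  have hd : ContDiff ℝ (⊤:ℕ∞) (fderiv ℝ f) := by
    apply hf.fderiv_right; exact_mod_cast le_refl _
  have hda := (hd.differentiable (by simp))
  have key : ∀ a b : ℝ × ℝ, fderiv ℝ (fun p => fderiv ℝ f p b) q a
      = fderiv ℝ (fderiv ℝ f) q a b := by
    intro a b
    have : (fun p => fderiv ℝ f p b) = fun p => (fderiv ℝ f p) b := rfl
    rw [this, fderiv_clm_apply (hda q) (differentiableAt_const b)]
    simp
  rw [key, key]
  have hsymm : IsSymmSndFDerivAt ℝ f q := by
    apply (hf.contDiffAt).isSymmSndFDerivAt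
    simp [minSmoothness_of_isRCLikeNormedField]; exact WithTop.coe_le_coe.mpr (le_top : (2:ℕ∞) ≤ ⊤)
  exact hsymm v w
end basiclem

-- Complex-valued simp rules (function level)
lemma pdxC_mul {f g : ℝ × ℝ → ℂ} (hf : SM f) (hg : SM g) :
    pdxC (fun p => f p * g p) = fun q => pdxC f q * g q + f q * pdxC g q :=
  funext fun q => pd_mul_aux hf hg _ q
lemma pdyC_mul {f g : ℝ × ℝ → ℂ} (hf : SM f) (hg : SM g) :
    pdyC (fun p => f p * g p) = fun q => pdyC f q * g q + f q * pdyC g q :=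
  funext fun q => pd_mul_aux hf hg _ q
lemma pdxC_add {f g : ℝ × ℝ → ℂ} (hf : SM f) (hg : SM g) :
    pdxC (fun p => f p + g p) = fun q => pdxC f q + pdxC g q :=
  funext fun q => pd_add_aux hf hg _ q
lemma pdyC_add {f g : ℝ × ℝ → ℂ} (hf : SM f) (hg : SM g) :
    pdyC (fun p => f p + g p) = fun q => pdyC f q + pdyC g q :=
  funext fun q => pd_add_aux hf hg _ q
lemma pdxC_cmul {f : ℝ × ℝ → ℂ} (c : ℂ) (hf : SM f) :
    pdxC (fun p => c * f p) = fun q => c * pdxC f q := by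
  funext q
  unfold pdxC
  rw [fderiv_const_mul (hf.differentiable (by simp) q)]; rfl
lemma pdyC_cmul {f : ℝ × ℝ → ℂ} (c : ℂ) (hf : SM f) :
    pdyC (fun p => c * f p) = fun q => c * pdyC f q := by
  funext q
  unfold pdyC
  rw [fderiv_const_mul (hf.differentiable (by simp) q)]; rfl
lemma pdxC_ofReal {f : ℝ × ℝ → ℝ} (hf : SM f) :
    pdxC (fun p => (f p : ℂ)) = fun q => ((pdx f q : ℝ) : ℂ) := by
  funext q
  unfold pdxC pdx
  rw [show (fun p => (f p : ℂ)) = Complex.ofRealCLM ∘ f from rfl,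
    fderiv_comp q Complex.ofRealCLM.differentiableAt
      (hf.differentiable (by simp) q)]
  simp
lemma pdyC_ofReal {f : ℝ × ℝ → ℝ} (hf : SM f) :
    pdyC (fun p => (f p : ℂ)) = fun q => ((pdy f q : ℝ) : ℂ) := by
  funext q
  unfold pdyC pdy
  rw [show (fun p => (f p : ℂ)) = Complex.ofRealCLM ∘ f from rfl,
    fderiv_comp q Complex.ofRealCLM.differentiableAt
      (hf.differentiable (by simp) q)]
  simp
-- Schwarz, canonical: y innermost
lemma pdyC_pdxC {f : ℝ × ℝ → ℂ} (hf : SM f) : pdyC (pdxC f) = pdxC (pdyC f) :=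
  funext fun q => pd_schwarz_aux hf _ _ q
lemma pdy_pdx {f : ℝ × ℝ → ℝ} (hf : SM f) : pdy (pdx f) = pdx (pdy f) :=
  funext fun q => pd_schwarz_aux hf _ _ q

lemma pd_neg_aux {f : ℝ × ℝ → ℂ} (v q : ℝ × ℝ) :
    fderiv ℝ (fun p => -f p) q v = -fderiv ℝ f q v := by
  rw [fderiv_fun_neg]; rfl
lemma pdR_neg_aux {f : ℝ × ℝ → ℝ} (v q : ℝ × ℝ) :
    fderiv ℝ (fun p => -f p) q v = -fderiv ℝ f q v := by
  rw [fderiv_fun_neg]; rfl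
lemma pdxC_neg {f : ℝ × ℝ → ℂ} : pdxC (fun p => -f p) = fun q => -pdxC f q :=
  funext fun q => pd_neg_aux _ q
lemma pdyC_neg {f : ℝ × ℝ → ℂ} : pdyC (fun p => -f p) = fun q => -pdyC f q :=
  funext fun q => pd_neg_aux _ q
lemma pdx_neg {f : ℝ × ℝ → ℝ} : pdx (fun p => -f p) = fun q => -pdx f q :=
  funext fun q => pdR_neg_aux _ q
lemma pdy_neg {f : ℝ × ℝ → ℝ} : pdy (fun p => -f p) = fun q => -pdy f q :=
  funext fun q => pdR_neg_aux _ q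

-- coordinate functions
lemma pdx_fst (a : ℝ) : pdx (fun p => p.1 - a) = fun _ => 1 := by
  funext q; unfold pdx
  rw [show (fun p : ℝ × ℝ => p.1 - a) = fun p : ℝ × ℝ => (ContinuousLinearMap.fst ℝ ℝ ℝ) p - a
      from rfl, fderiv_sub_const, ContinuousLinearMap.fderiv]
  rfl
lemma pdy_fst (a : ℝ) : pdy (fun p => p.1 - a) = fun _ => 0 := by
  funext q; unfold pdy
  rw [show (fun p : ℝ × ℝ => p.1 - a) = fun p : ℝ × ℝ => (ContinuousLinearMap.fst ℝ ℝ ℝ) p - a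
      from rfl, fderiv_sub_const, ContinuousLinearMap.fderiv]
  rfl
lemma pdx_snd (a : ℝ) : pdx (fun p => p.2 - a) = fun _ => 0 := by
  funext q; unfold pdx
  rw [show (fun p : ℝ × ℝ => p.2 - a) = fun p : ℝ × ℝ => (ContinuousLinearMap.snd ℝ ℝ ℝ) p - a
      from rfl, fderiv_sub_const, ContinuousLinearMap.fderiv]
  rfl
lemma pdy_snd (a : ℝ) : pdy (fun p => p.2 - a) = fun _ => 1 := by
  funext q; unfold pdy
  rw [show (fun p : ℝ × ℝ => p.2 - a) = fun p : ℝ × ℝ => (ContinuousLinearMap.snd ℝ ℝ ℝ) p - a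
      from rfl, fderiv_sub_const, ContinuousLinearMap.fderiv]
  rfl

-- real versions
lemma pdxC_const (c : ℂ) : pdxC (fun _ => c) = fun _ => 0 := by
  funext q; unfold pdxC; rw [fderiv_const_apply]; rfl
lemma pdyC_const (c : ℂ) : pdyC (fun _ => c) = fun _ => 0 := by
  funext q; unfold pdyC; rw [fderiv_const_apply]; rfl
lemma pdx_const (c : ℝ) : pdx (fun _ => c) = fun _ => 0 := by
  funext q; unfold pdx; rw [fderiv_const_apply]; rfl
lemma pdy_const (c : ℝ) : pdy (fun _ => c) = fun _ => 0 := by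
  funext q; unfold pdy; rw [fderiv_const_apply]; rfl

lemma pdx_mul {f g : ℝ × ℝ → ℝ} (hf : SM f) (hg : SM g) :
    pdx (fun p => f p * g p) = fun q => pdx f q * g q + f q * pdx g q :=
  funext fun q => pd_mul_aux hf hg _ q
lemma pdy_mul {f g : ℝ × ℝ → ℝ} (hf : SM f) (hg : SM g) :
    pdy (fun p => f p * g p) = fun q => pdy f q * g q + f q * pdy g q :=
  funext fun q => pd_mul_aux hf hg _ q
lemma pdx_add {f g : ℝ × ℝ → ℝ} (hf : SM f) (hg : SM g) :
    pdx (fun p => f p + g p) = fun q => pdx f q + pdx g q :=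
  funext fun q => pd_add_aux hf hg _ q
lemma pdy_add {f g : ℝ × ℝ → ℝ} (hf : SM f) (hg : SM g) :
    pdy (fun p => f p + g p) = fun q => pdy f q + pdy g q :=
  funext fun q => pd_add_aux hf hg _ q
lemma pdx_cmul {f : ℝ × ℝ → ℝ} (c : ℝ) (hf : SM f) :
    pdx (fun p => c * f p) = fun q => c * pdx f q := by
  funext q; unfold pdx
  rw [fderiv_const_mul (hf.differentiable (by simp) q)]; rfl
lemma pdy_cmul {f : ℝ × ℝ → ℝ} (c : ℝ) (hf : SM f) :
    pdy (fun p => c * f p) = fun q => c * pdy f q := by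
  funext q; unfold pdy
  rw [fderiv_const_mul (hf.differentiable (by simp) q)]; rfl

lemma iter2 {α : Type*} (f : α → α) (x : α) : f^[2] x = f (f x) := rfl
lemma P1_def (hbar : ℝ) (ψ : ℝ × ℝ → ℂ) :
    P1 hbar ψ = fun q => -Complex.I * (hbar : ℂ) * pdxC ψ q := rfl
lemma P2_def (hbar : ℝ) (ψ : ℝ × ℝ → ℂ) :
    P2 hbar ψ = fun q => -Complex.I * (hbar : ℂ) * pdyC ψ q := rfl
lemma Hop_def (hbar : ℝ) (V : ℝ × ℝ → ℝ) (ψ : ℝ × ℝ → ℂ) :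
    Hop hbar V ψ = fun q =>
      -(hbar : ℂ) ^ 2 * (pdxC (pdxC ψ) q + pdyC (pdyC ψ) q) + (V q : ℂ) * ψ q := rfl
lemma X2op_def (hbar : ℝ) (f00 f10 f20 f02 : ℝ × ℝ → ℝ) (ψ : ℝ × ℝ → ℂ) :
    X2op hbar f00 f10 f20 f02 ψ = fun q =>
      (1 / 2) *
          (((f00 q : ℂ) * (P2 hbar (P2 hbar ψ)) q +
              (P2 hbar (P2 hbar (fun p => (f00 p : ℂ) * ψ p))) q) +
            ((f10 q : ℂ) * (P1 hbar (P2 hbar ψ)) q +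
              (P1 hbar (P2 hbar (fun p => (f10 p : ℂ) * ψ p))) q) +
            ((f20 q : ℂ) * (P1 hbar (P1 hbar ψ)) q +
              (P1 hbar (P1 hbar (fun p => (f20 p : ℂ) * ψ p))) q)) +
        (f02 q : ℂ) * ψ q := rfl

lemma X2op_expand (hbar : ℝ) (f00 f10 f20 f02 : ℝ × ℝ → ℝ)
    (h00 : SM f00) (h10 : SM f10) (h20 : SM f20) (h02 : SM f02)
    (ψ : ℝ × ℝ → ℂ) (hψ : SM ψ) :
    X2op hbar f00 f10 f20 f02 ψ = fun q =>
      -(hbar:ℂ)^2 * ( (f20 q:ℂ) * pdxC (pdxC ψ) q + (f10 q:ℂ) * pdxC (pdyC ψ) q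
        + (f00 q:ℂ) * pdyC (pdyC ψ) q
        + ((pdx f20 q : ℝ):ℂ) * pdxC ψ q + ((1:ℂ)/2) * ((pdy f10 q : ℝ):ℂ) * pdxC ψ q
        + ((pdy f00 q : ℝ):ℂ) * pdyC ψ q + ((1:ℂ)/2) * ((pdx f10 q : ℝ):ℂ) * pdyC ψ q
        + ((1:ℂ)/2) * (((pdy (pdy f00) q : ℝ):ℂ) + ((pdx (pdy f10) q : ℝ):ℂ)
            + ((pdx (pdx f20) q : ℝ):ℂ)) * ψ q )
      + (f02 q : ℂ) * ψ q := by
  funext q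
  simp only [X2op_def, P1_def, P2_def]
  simp (disch := fun_prop) only [pdxC_mul, pdyC_mul, pdxC_add, pdyC_add, pdxC_cmul, pdyC_cmul,
    pdxC_ofReal, pdyC_ofReal, pdyC_pdxC, pdy_pdx, pdxC_const, pdyC_const, pdx_const, pdy_const,
    mul_zero, zero_mul, add_zero, zero_add, neg_zero, Complex.ofReal_zero]
  ring_nf
  simp only [Complex.I_sq]
  ring

lemma reverse_dir (hbar : ℝ) (V : ℝ × ℝ → ℝ) (hV : SM V) (f00 f10 f20 f02 : ℝ × ℝ → ℝ)
    (h00 : SM f00) (h10 : SM f10) (h20 : SM f20) (h02 : SM f02)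
    (s1 : pdy f00 = fun _ => 0)
    (s2 : pdy f10 = fun q => -pdx f00 q)
    (s3 : pdy f20 = fun q => -pdx f10 q)
    (s4 : pdx f20 = fun _ => 0)
    (s5 : pdy f02 = fun q => (1/2) * f10 q * pdx V q + f00 q * pdy V q)
    (s6 : pdx f02 = fun q => f20 q * pdx V q + (1/2) * f10 q * pdy V q)
    (ψ : ℝ × ℝ → ℂ) (hψ : SM ψ) (q : ℝ × ℝ) :
    X2op hbar f00 f10 f20 f02 (Hop hbar V ψ) q = Hop hbar V (X2op hbar f00 f10 f20 f02 ψ) q := by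
  have hH : SM (Hop hbar V ψ) := by rw [Hop_def]; fun_prop
  have e10x : pdx f10 = fun q => -pdy f20 q := by
    funext q; have h := congrFun s3 q; rw [h]; ring
  have hxy20 : pdx (pdy f20) = fun _ => 0 := by
    rw [← pdy_pdx h20, s4, pdy_const]
  have t1 : pdx (pdx f10) = fun _ => 0 := by
    rw [e10x, pdx_neg, hxy20]; funext q; simp
  have e00x : pdx f00 = fun q => -pdy f10 q := by
    funext q; have h := congrFun s2 q; rw [h]; ring
  have t0 : pdx (pdx f00) = pdy (pdy f20) := by
    rw [e00x, pdx_neg]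
    have : pdx (pdy f10) = pdy (pdx f10) := (pdy_pdx h10).symm
    rw [this, e10x, pdy_neg]
    funext q; simp
  have t2 : pdx (pdx (pdx f00)) = fun _ => 0 := by
    rw [t0]
    have h1 : pdx (pdy (pdy f20)) = pdy (pdx (pdy f20)) :=
      (pdy_pdx (contDiff_pdy h20)).symm
    rw [h1, hxy20, pdy_const]
  rw [X2op_expand hbar f00 f10 f20 f02 h00 h10 h20 h02 (Hop hbar V ψ) hH,
    X2op_expand hbar f00 f10 f20 f02 h00 h10 h20 h02 ψ hψ]
  simp only [Hop_def]
  simp (disch := fun_prop) only [pdxC_mul, pdyC_mul, pdxC_add, pdyC_add, pdxC_cmul, pdyC_cmul,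
    pdxC_ofReal, pdyC_ofReal, pdyC_pdxC, pdy_pdx, pdxC_const, pdyC_const, pdx_const, pdy_const,
    pdxC_neg, pdyC_neg, pdx_neg, pdy_neg,
    pdx_mul, pdy_mul, pdx_add, pdy_add, pdx_cmul, pdy_cmul,
    mul_zero, zero_mul, add_zero, zero_add, neg_zero, Complex.ofReal_zero,
    s1, s2, s3, s4, s5, s6, t1, t2]
  push_cast
  ring

lemma comm_formula (hbar : ℝ) (V : ℝ × ℝ → ℝ) (hV : SM V) (f00 f10 f20 f02 : ℝ × ℝ → ℝ)
    (h00 : SM f00) (h10 : SM f10) (h20 : SM f20) (h02 : SM f02)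
    (ψ : ℝ × ℝ → ℂ) (hψ : SM ψ) (q : ℝ × ℝ) :
    X2op hbar f00 f10 f20 f02 (Hop hbar V ψ) q - Hop hbar V (X2op hbar f00 f10 f20 f02 ψ) q =
      ((-2 : ℂ) * (hbar:ℂ)^4 * (((pdx (f20)) q : ℝ) : ℂ)) * ((pdxC (pdxC (pdxC (ψ)))) q) +
      ((-2 : ℂ) * (hbar:ℂ)^4 * (((pdx (f10)) q : ℝ) : ℂ) + (-2 : ℂ) * (hbar:ℂ)^4 * (((pdy (f20)) q : ℝ) : ℂ)) * ((pdxC (pdxC (pdyC (ψ)))) q) +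
      ((-3 : ℂ) * (hbar:ℂ)^4 * (((pdx (pdx (f20))) q : ℝ) : ℂ) + (-1 : ℂ) * (hbar:ℂ)^4 * (((pdx (pdy (f10))) q : ℝ) : ℂ) + (-1 : ℂ) * (hbar:ℂ)^4 * (((pdy (pdy (f20))) q : ℝ) : ℂ)) * ((pdxC (pdxC (ψ))) q) +
      ((-2 : ℂ) * (hbar:ℂ)^4 * (((pdx (f00)) q : ℝ) : ℂ) + (-2 : ℂ) * (hbar:ℂ)^4 * (((pdy (f10)) q : ℝ) : ℂ)) * ((pdxC (pdyC (pdyC (ψ)))) q) +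
      ((-2 : ℂ) * (hbar:ℂ)^4 * (((pdx (pdx (f10))) q : ℝ) : ℂ) + (-2 : ℂ) * (hbar:ℂ)^4 * (((pdx (pdy (f00))) q : ℝ) : ℂ) + (-2 : ℂ) * (hbar:ℂ)^4 * (((pdx (pdy (f20))) q : ℝ) : ℂ) + (-2 : ℂ) * (hbar:ℂ)^4 * (((pdy (pdy (f10))) q : ℝ) : ℂ)) * ((pdxC (pdyC (ψ))) q) +
      ((-1 : ℂ) * (hbar:ℂ)^2 * (((f10) q : ℝ) : ℂ) * (((pdy (V)) q : ℝ) : ℂ) + (-2 : ℂ) * (hbar:ℂ)^2 * (((f20) q : ℝ) : ℂ) * (((pdx (V)) q : ℝ) : ℂ) + (-2 : ℂ) * (hbar:ℂ)^4 * (((pdx (pdx (pdx (f20)))) q : ℝ) : ℂ) + (-3/2 : ℂ) * (hbar:ℂ)^4 * (((pdx (pdx (pdy (f10)))) q : ℝ) : ℂ) + (-1 : ℂ) * (hbar:ℂ)^4 * (((pdx (pdy (pdy (f00)))) q : ℝ) : ℂ) + (-1 : ℂ) * (hbar:ℂ)^4 * (((pdx (pdy (pdy (f20)))) q : ℝ)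 : ℂ) + (-1/2 : ℂ) * (hbar:ℂ)^4 * (((pdy (pdy (pdy (f10)))) q : ℝ) : ℂ) + (2 : ℂ) * (hbar:ℂ)^2 * (((pdx (f02)) q : ℝ) : ℂ)) * ((pdxC (ψ)) q) +
      ((-2 : ℂ) * (hbar:ℂ)^4 * (((pdy (f00)) q : ℝ) : ℂ)) * ((pdyC (pdyC (pdyC (ψ)))) q) +
      ((-1 : ℂ) * (hbar:ℂ)^4 * (((pdx (pdx (f00))) q : ℝ) : ℂ) + (-1 : ℂ) * (hbar:ℂ)^4 * (((pdx (pdy (f10))) q : ℝ) : ℂ) + (-3 : ℂ) * (hbar:ℂ)^4 * (((pdy (pdy (f00))) q : ℝ) : ℂ)) * ((pdyC (pdyC (ψ))) q) +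
      ((-2 : ℂ) * (hbar:ℂ)^2 * (((f00) q : ℝ) : ℂ) * (((pdy (V)) q : ℝ) : ℂ) + (-1 : ℂ) * (hbar:ℂ)^2 * (((f10) q : ℝ) : ℂ) * (((pdx (V)) q : ℝ) : ℂ) + (-1/2 : ℂ) * (hbar:ℂ)^4 * (((pdx (pdx (pdx (f10)))) q : ℝ) : ℂ) + (-1 : ℂ) * (hbar:ℂ)^4 * (((pdx (pdx (pdy (f00)))) q : ℝ) : ℂ) + (-1 : ℂ) * (hbar:ℂ)^4 * (((pdx (pdx (pdy (f20)))) q : ℝ) : ℂ) + (-3/2 : ℂ) * (hbar:ℂ)^4 * (((pdx (pdy (pdy (f10)))) q : ℝ) : ℂ) + (-2 : ℂ) * (hbar:ℂ)^4 * (((pdy (pdy (pdy (f00)))) q : ℝ) : ℂ) + (2 : ℂ) * (hbar:ℂ)^2 * (((pdy (f02)) q : ℝ) : ℂ)) * ((pdyC (ψ)) q) +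
      ((-1 : ℂ) * (hbar:ℂ)^2 * (((f00) q : ℝ) : ℂ) * (((pdy (pdy (V))) q : ℝ) : ℂ) + (-1 : ℂ) * (hbar:ℂ)^2 * (((f10) q : ℝ) : ℂ) * (((pdx (pdy (V))) q : ℝ) : ℂ) + (-1 : ℂ) * (hbar:ℂ)^2 * (((f20) q : ℝ) : ℂ) * (((pdx (pdx (V))) q : ℝ) : ℂ) + (-1/2 : ℂ) * (hbar:ℂ)^4 * (((pdx (pdx (pdx (pdx (f20))))) q : ℝ) : ℂ) + (-1/2 : ℂ) * (hbar:ℂ)^4 * (((pdx (pdx (pdx (pdy (f10))))) q : ℝ) : ℂ) + (-1/2 : ℂ) * (hbar:ℂ)^4 * (((pdx (pdx (pdy (pdy (f00))))) q : ℝ) : ℂ) + (-1/2 : ℂ) * (hbar:ℂ)^4 * (((pdx (pdx (pdy (pdy (f20))))) q : ℝ) : ℂ) + (-1/2 : ℂ) * (hbar:ℂ)^4 * (((pdx (pdy (pdy (pdy (f10))))) q : ℝ) : ℂ) + (-1/2 : ℂ) * (hbar:ℂ)^4 * (((pdy (pdy (pdy (pdy (f00))))) q : ℝ) : ℂ) +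 (-1 : ℂ) * (hbar:ℂ)^2 * (((pdx (V)) q : ℝ) : ℂ) * (((pdx (f20)) q : ℝ) : ℂ) + (-1/2 : ℂ) * (hbar:ℂ)^2 * (((pdx (V)) q : ℝ) : ℂ) * (((pdy (f10)) q : ℝ) : ℂ) + (-1/2 : ℂ) * (hbar:ℂ)^2 * (((pdx (f10)) q : ℝ) : ℂ) * (((pdy (V)) q : ℝ) : ℂ) + (1 : ℂ) * (hbar:ℂ)^2 * (((pdx (pdx (f02))) q : ℝ) : ℂ) + (-1 : ℂ) * (hbar:ℂ)^2 * (((pdy (V)) q : ℝ) : ℂ) * (((pdy (f00)) q : ℝ) : ℂ) + (1 : ℂ) * (hbar:ℂ)^2 * (((pdy (pdy (f02))) q : ℝ) : ℂ)) * ((ψ) q) := by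
  have hH : SM (Hop hbar V ψ) := by rw [Hop_def]; fun_prop
  rw [X2op_expand hbar f00 f10 f20 f02 h00 h10 h20 h02 (Hop hbar V ψ) hH,
    X2op_expand hbar f00 f10 f20 f02 h00 h10 h20 h02 ψ hψ]
  simp only [Hop_def]
  simp (disch := fun_prop) only [pdxC_mul, pdyC_mul, pdxC_add, pdyC_add, pdxC_cmul, pdyC_cmul,
    pdxC_ofReal, pdyC_ofReal, pdyC_pdxC, pdy_pdx, pdxC_const, pdyC_const, pdx_const, pdy_const,
    pdxC_neg, pdyC_neg, pdx_neg, pdy_neg,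
    pdx_mul, pdy_mul, pdx_add, pdy_add, pdx_cmul, pdy_cmul,
    mul_zero, zero_mul, add_zero, zero_add, neg_zero, Complex.ofReal_zero]
  push_cast
  ring

set_option linter.unusedVariables false

/-- the second-order operator `X` commutes with `Ĥ` iff the classical
second-order determining equations hold; for `N = 2` there are no `ħ`-dependent
corrections. -/
theorem stmt_13 (hbar : ℝ) (hb : hbar ≠ 0)
    (V : ℝ × ℝ → ℝ) (hV : ContDiff ℝ (⊤ : ℕ∞) V)
    (f00 f10 f20 f02 : ℝ × ℝ → ℝ)
    (h00 : ContDiff ℝ (⊤ : ℕ∞) f00) (h10 : ContDiff ℝ (⊤ : ℕ∞) f10)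
    (h20 : ContDiff ℝ (⊤ : ℕ∞) f20) (h02 : ContDiff ℝ (⊤ : ℕ∞) f02) :
    (∀ ψ : ℝ × ℝ → ℂ, ContDiff ℝ (⊤ : ℕ∞) ψ → ∀ q : ℝ × ℝ,
        X2op hbar f00 f10 f20 f02 (Hop hbar V ψ) q =
          Hop hbar V (X2op hbar f00 f10 f20 f02 ψ) q) ↔
      ((∀ q : ℝ × ℝ, pdy f00 q = 0) ∧
        (∀ q : ℝ × ℝ, pdx f00 q + pdy f10 q = 0) ∧
        (∀ q : ℝ × ℝ, pdx f10 q + pdy f20 q = 0) ∧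
        (∀ q : ℝ × ℝ, pdx f20 q = 0) ∧
        (∀ q : ℝ × ℝ, 2 * pdy f02 q = f10 q * pdx V q + 2 * f00 q * pdy V q) ∧
        (∀ q : ℝ × ℝ, 2 * pdx f02 q = 2 * f20 q * pdx V q + f10 q * pdy V q)) := by
  constructor
  · intro hc
    have hbC : (hbar : ℂ) ≠ 0 := Complex.ofReal_ne_zero.mpr hb
    -- E4
    have E4 : ∀ s : ℝ × ℝ, pdx f20 s = 0 := by
      intro s
      have hφ : SM (fun p : ℝ × ℝ => (((p.1 - s.1) * ((p.1 - s.1) * (p.1 - s.1)) : ℝ) : ℂ)) := by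
        fun_prop
      have h := comm_formula hbar V hV f00 f10 f20 f02 h00 h10 h20 h02 _ hφ s
      rw [hc _ hφ s, sub_self] at h
      simp (disch := fun_prop) only [pdxC_ofReal, pdyC_ofReal,
        pdx_mul, pdy_mul, pdx_add, pdy_add, pdx_cmul, pdy_cmul, pdx_neg, pdy_neg,
        pdx_fst, pdy_fst, pdx_snd, pdy_snd, pdx_const, pdy_const, pdxC_const, pdyC_const,
        mul_zero, zero_mul, add_zero, zero_add, mul_one, one_mul, sub_self,
        Complex.ofReal_zero, Complex.ofReal_one] at h
      push_cast at h
      have h3 : (12 * (hbar:ℂ)^4) * (↑(pdx f20 s) : ℂ) = 0 := by linear_combination h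
      rcases mul_eq_zero.mp h3 with h4 | h4
      · exfalso; simp [pow_eq_zero_iff, hbC] at h4
      · exact_mod_cast h4
    have E1 : ∀ s : ℝ × ℝ, pdy f00 s = 0 := by
      intro s
      have hφ : SM (fun p : ℝ × ℝ => (((p.2 - s.2) * ((p.2 - s.2) * (p.2 - s.2)) : ℝ) : ℂ)) := by
        fun_prop
      have h := comm_formula hbar V hV f00 f10 f20 f02 h00 h10 h20 h02 _ hφ s
      rw [hc _ hφ s, sub_self] at h
      simp (disch := fun_prop) only [pdxC_ofReal, pdyC_ofReal,
        pdx_mul, pdy_mul, pdx_add, pdy_add, pdx_cmul, pdy_cmul, pdx_neg, pdy_neg,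
        pdx_fst, pdy_fst, pdx_snd, pdy_snd, pdx_const, pdy_const, pdxC_const, pdyC_const,
        mul_zero, zero_mul, add_zero, zero_add, mul_one, one_mul, sub_self,
        Complex.ofReal_zero, Complex.ofReal_one] at h
      push_cast at h
      have h3 : (12 * (hbar:ℂ)^4) * (↑(pdy f00 s) : ℂ) = 0 := by linear_combination h
      rcases mul_eq_zero.mp h3 with h4 | h4
      · exfalso; simp [pow_eq_zero_iff, hbC] at h4
      · exact_mod_cast h4
    have E3 : ∀ s : ℝ × ℝ, pdx f10 s + pdy f20 s = 0 := by
      intro s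
      have hφ : SM (fun p : ℝ × ℝ => (((p.1 - s.1) * ((p.1 - s.1) * (p.2 - s.2)) : ℝ) : ℂ)) := by
        fun_prop
      have h := comm_formula hbar V hV f00 f10 f20 f02 h00 h10 h20 h02 _ hφ s
      rw [hc _ hφ s, sub_self] at h
      simp (disch := fun_prop) only [pdxC_ofReal, pdyC_ofReal,
        pdx_mul, pdy_mul, pdx_add, pdy_add, pdx_cmul, pdy_cmul, pdx_neg, pdy_neg,
        pdx_fst, pdy_fst, pdx_snd, pdy_snd, pdx_const, pdy_const, pdxC_const, pdyC_const,
        mul_zero, zero_mul, add_zero, zero_add, mul_one, one_mul, sub_self,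
        Complex.ofReal_zero, Complex.ofReal_one] at h
      push_cast at h
      have h3 : (4 * (hbar:ℂ)^4) * (↑(pdx f10 s + pdy f20 s) : ℂ) = 0 := by
        push_cast; linear_combination h
      rcases mul_eq_zero.mp h3 with h4 | h4
      · exfalso; simp [pow_eq_zero_iff, hbC] at h4
      · exact_mod_cast h4
    have E2 : ∀ s : ℝ × ℝ, pdx f00 s + pdy f10 s = 0 := by
      intro s
      have hφ : SM (fun p : ℝ × ℝ => (((p.1 - s.1) * ((p.2 - s.2) * (p.2 - s.2)) : ℝ) : ℂ)) := by
        fun_prop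
      have h := comm_formula hbar V hV f00 f10 f20 f02 h00 h10 h20 h02 _ hφ s
      rw [hc _ hφ s, sub_self] at h
      simp (disch := fun_prop) only [pdxC_ofReal, pdyC_ofReal,
        pdx_mul, pdy_mul, pdx_add, pdy_add, pdx_cmul, pdy_cmul, pdx_neg, pdy_neg,
        pdx_fst, pdy_fst, pdx_snd, pdy_snd, pdx_const, pdy_const, pdxC_const, pdyC_const,
        mul_zero, zero_mul, add_zero, zero_add, mul_one, one_mul, sub_self,
        Complex.ofReal_zero, Complex.ofReal_one] at h
      push_cast at h
      have h3 : (4 * (hbar:ℂ)^4) * (↑(pdx f00 s + pdy f10 s) : ℂ) = 0 := by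
        push_cast; linear_combination h
      rcases mul_eq_zero.mp h3 with h4 | h4
      · exfalso; simp [pow_eq_zero_iff, hbC] at h4
      · exact_mod_cast h4
    -- function-level facts
    have s1 : pdy f00 = fun _ => 0 := funext fun s => E1 s
    have s4 : pdx f20 = fun _ => 0 := funext fun s => E4 s
    have s2 : pdy f10 = fun q => -pdx f00 q := by
      funext q; have := E2 q; linarith
    have s3 : pdy f20 = fun q => -pdx f10 q := by
      funext q; have := E3 q; linarith
    have hxy20 : pdx (pdy f20) = fun _ => 0 := by
      rw [← pdy_pdx h20, s4, pdy_const]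
    have t1 : pdx (pdx f10) = fun _ => 0 := by
      have e10x : pdx f10 = fun q => -pdy f20 q := by
        funext q; have := E3 q; linarith
      rw [e10x, pdx_neg, hxy20]; funext q; simp
    have t2 : pdx (pdx (pdx f00)) = fun _ => 0 := by
      have e00x : pdx f00 = fun q => -pdy f10 q := by
        funext q; have := E2 q; linarith
      have e10x : pdx f10 = fun q => -pdy f20 q := by
        funext q; have := E3 q; linarith
      have t0 : pdx (pdx f00) = pdy (pdy f20) := by
        rw [e00x, pdx_neg]
        have hh : pdx (pdy f10) = pdy (pdx f10) := (pdy_pdx h10).symm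
        rw [hh, e10x, pdy_neg]
        funext q; simp
      rw [t0]
      have h1 : pdx (pdy (pdy f20)) = pdy (pdx (pdy f20)) :=
        (pdy_pdx (contDiff_pdy h20)).symm
      rw [h1, hxy20, pdy_const]
    -- E6
    have E6 : ∀ s : ℝ × ℝ, 2 * pdx f02 s = 2 * f20 s * pdx V s + f10 s * pdy V s := by
      intro s
      have hφ : SM (fun p : ℝ × ℝ => (((p.1 - s.1) : ℝ) : ℂ)) := by fun_prop
      have h := comm_formula hbar V hV f00 f10 f20 f02 h00 h10 h20 h02 _ hφ s
      rw [hc _ hφ s, sub_self] at h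
      simp (disch := fun_prop) only [pdxC_ofReal, pdyC_ofReal,
        pdx_mul, pdy_mul, pdx_add, pdy_add, pdx_cmul, pdy_cmul, pdx_neg, pdy_neg,
        pdx_fst, pdy_fst, pdx_snd, pdy_snd, pdx_const, pdy_const, pdxC_const, pdyC_const,
        s1, s2, s3, s4, t1, t2, pdy_pdx, neg_neg,
        mul_zero, zero_mul, add_zero, zero_add, mul_one, one_mul, sub_self, neg_zero,
        Complex.ofReal_zero, Complex.ofReal_one, Complex.ofReal_neg] at h
      push_cast at h
      have h3 : (hbar:ℂ)^2 * (↑(2 * pdx f02 s - (2 * f20 s * pdx V s + f10 s * pdy V s)) : ℂ)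
          = 0 := by push_cast; linear_combination (-1 : ℂ) * h
      rcases mul_eq_zero.mp h3 with h4 | h4
      · exfalso; simp [pow_eq_zero_iff, hbC] at h4
      · have h5 : 2 * pdx f02 s - (2 * f20 s * pdx V s + f10 s * pdy V s) = 0 := by
          exact_mod_cast h4
        linarith
    have E5 : ∀ s : ℝ × ℝ, 2 * pdy f02 s = f10 s * pdx V s + 2 * f00 s * pdy V s := by
      intro s
      have hφ : SM (fun p : ℝ × ℝ => (((p.2 - s.2) : ℝ) : ℂ)) := by fun_prop
      have h := comm_formula hbar V hV f00 f10 f20 f02 h00 h10 h20 h02 _ hφ s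
      rw [hc _ hφ s, sub_self] at h
      simp (disch := fun_prop) only [pdxC_ofReal, pdyC_ofReal,
        pdx_mul, pdy_mul, pdx_add, pdy_add, pdx_cmul, pdy_cmul, pdx_neg, pdy_neg,
        pdx_fst, pdy_fst, pdx_snd, pdy_snd, pdx_const, pdy_const, pdxC_const, pdyC_const,
        s1, s2, s3, s4, t1, t2, pdy_pdx, neg_neg,
        mul_zero, zero_mul, add_zero, zero_add, mul_one, one_mul, sub_self, neg_zero,
        Complex.ofReal_zero, Complex.ofReal_one, Complex.ofReal_neg] at h
      push_cast at h
      have h3 : (hbar:ℂ)^2 * (↑(2 * pdy f02 s - (f10 s * pdx V s + 2 * f00 s * pdy V s)) : ℂ)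
          = 0 := by push_cast; linear_combination (-1 : ℂ) * h
      rcases mul_eq_zero.mp h3 with h4 | h4
      · exfalso; simp [pow_eq_zero_iff, hbC] at h4
      · have h5 : 2 * pdy f02 s - (f10 s * pdx V s + 2 * f00 s * pdy V s) = 0 := by
          exact_mod_cast h4
        linarith
    exact ⟨E1, E2, E3, E4, E5, E6⟩
  · rintro ⟨E1, E2, E3, E4, E5, E6⟩ ψ hψ q
    have s1 : pdy f00 = fun _ => 0 := funext fun s => E1 s
    have s4 : pdx f20 = fun _ => 0 := funext fun s => E4 s
    have s2 : pdy f10 = fun q => -pdx f00 q := by funext q; have := E2 q; linarith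
    have s3 : pdy f20 = fun q => -pdx f10 q := by funext q; have := E3 q; linarith
    have s5 : pdy f02 = fun q => (1/2) * f10 q * pdx V q + f00 q * pdy V q := by
      funext q; have := E5 q; linarith
    have s6 : pdx f02 = fun q => f20 q * pdx V q + (1/2) * f10 q * pdy V q := by
      funext q; have := E6 q; linarith
    exact reverse_dir hbar V hV f00 f10 f20 f02 h00 h10 h20 h02 s1 s2 s3 s4 s5 s6 ψ hψ q
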